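/- Webb's example: let W be the persistence module over the poset T = {0, −1, −2, …} of nonpositive integers defined by W_0 = k^ℕ (the space of all sequences (x_1, x_2, x_3, …) with entries in k), W_{−n} = {x ∈ k^ℕ : x_1 = ⋯ = x_n = 0} for n ≥ 1, with structure maps the inclusions W_{−m} ⊆ W_{−n} for m ≥ n. Then W is not isomorphic to any direct sum of interval modules. -/

import Mathlib

attribute [local instance] Classical.propDecidable

structure PersMod (k : Type) [Field k] (T : Type) [Preorder T] where
  space : T → Type
  [addCommGroup : ∀ t, AddCommGroup (space t)]
  [module : ∀ t, Module k (space t)]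
  map : ∀ s t : T, s ≤ t → space s →ₗ[k] space t
  map_id : ∀ t, map t t le_rfl = LinearMap.id
  map_comp : ∀ r s t (h1 : r ≤ s) (h2 : s ≤ t),
    (map s t h2).comp (map r s h1) = map r t (h1.trans h2)

attribute [instance] PersMod.addCommGroup PersMod.module

def PersIso {k : Type} [Field k] {T : Type} [Preorder T] (U V : PersMod k T) : Prop :=
  ∃ e : ∀ t, U.space t ≃ₗ[k] V.space t,
    ∀ s t (h : s ≤ t),
      (e t).toLinearMap.comp (U.map s t h) = (V.map s t h).comp (e s).toLinearMap

def IsIntervalSet {T : Type} [Preorder T] (J : Set T) : Prop :=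
  J.Nonempty ∧ ∀ ⦃r s t : T⦄, r ∈ J → t ∈ J → r ≤ s → s ≤ t → s ∈ J

noncomputable def intervalModule (k : Type) [Field k] (T : Type) [Preorder T]
    (J : Set T) (hJ : IsIntervalSet J) : PersMod k T where
  space t := PLift (t ∈ J) → k
  addCommGroup := fun _ => inferInstance
  module := fun _ => inferInstance
  map s t _ :=
    { toFun := fun f _ => if hs : s ∈ J then f ⟨hs⟩ else 0
      map_add' := fun f g => by
        funext ht; by_cases hs : s ∈ J <;> simp [hs]
      map_smul' := fun c f => by
        funext ht; by_cases hs : s ∈ J <;> simp [hs] }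
  map_id t := by
    refine LinearMap.ext fun f => funext fun ht => ?_
    show (if hs : t ∈ J then f ⟨hs⟩ else 0) = f ht
    rw [dif_pos ht.down]
  map_comp r s t h1 h2 := by
    refine LinearMap.ext fun f => funext fun ht => ?_
    show (if hs : s ∈ J then (if hr : r ∈ J then f ⟨hr⟩ else 0) else 0)
        = (if hr : r ∈ J then f ⟨hr⟩ else 0)
    by_cases hr : r ∈ J
    · have hs : s ∈ J := hJ.2 hr ht.down h1 h2
      simp [hr, hs]
    · by_cases hs : s ∈ J <;> simp [hr, hs]

noncomputable def dsum {k : Type} [Field k] {T : Type} [Preorder T] {L : Type}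
    (V : L → PersMod k T) : PersMod k T where
  space t := DFinsupp (fun ℓ => (V ℓ).space t)
  addCommGroup := fun _ => inferInstance
  module := fun _ => inferInstance
  map s t h := DFinsupp.mapRange.linearMap (fun ℓ => (V ℓ).map s t h)
  map_id t := by
    show DFinsupp.mapRange.linearMap (fun ℓ => (V ℓ).map t t le_rfl) = LinearMap.id
    have : (fun ℓ => (V ℓ).map t t le_rfl)
        = fun ℓ => (LinearMap.id : (V ℓ).space t →ₗ[k] (V ℓ).space t) :=
      funext fun ℓ => (V ℓ).map_id t
    rw [this]
    exact DFinsupp.mapRange.linearMap_id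
  map_comp r s t h1 h2 := by
    show (DFinsupp.mapRange.linearMap (fun ℓ => (V ℓ).map s t h2)).comp
        (DFinsupp.mapRange.linearMap (fun ℓ => (V ℓ).map r s h1))
      = DFinsupp.mapRange.linearMap (fun ℓ => (V ℓ).map r t (h1.trans h2))
    rw [← DFinsupp.mapRange.linearMap_comp]
    congr 1
    funext ℓ
    exact (V ℓ).map_comp r s t h1 h2

open scoped ENNReal

section Dim

noncomputable def edim (k : Type) [Field k] (M : Type) [AddCommGroup M] [Module k M] : ℕ∞ :=
  Cardinal.toENat (Module.rank k M)

noncomputable def erank {k : Type} [Field k] {M N : Type} [AddCommGroup M] [Module k M]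
    [AddCommGroup N] [Module k N] (f : M →ₗ[k] N) : ℕ∞ :=
  edim k (LinearMap.range f)

noncomputable def ecard (S : Type) : ℕ∞ := Cardinal.toENat (Cardinal.mk S)

end Dim

section Matchings

noncomputable def eDiff (x y : EReal) : ℝ≥0∞ :=
  if x = y then 0
  else if x = ⊤ ∨ x = ⊥ ∨ y = ⊤ ∨ y = ⊥ then ⊤
  else ENNReal.ofReal |x.toReal - y.toReal|

noncomputable def dPt (α β : EReal × EReal) : ℝ≥0∞ :=
  max (eDiff α.1 β.1) (eDiff α.2 β.2)

noncomputable def diagDist (α : EReal × EReal) : ℝ≥0∞ :=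
  if α.1 = ⊥ ∨ α.2 = ⊤ then ⊤ else ENNReal.ofReal ((α.2.toReal - α.1.toReal) / 2)

def IsMatching {α β : Type} (M : Set (α × β)) : Prop :=
  (∀ a b b', (a, b) ∈ M → (a, b') ∈ M → b = b') ∧
  (∀ a a' b, (a, b) ∈ M → (a', b) ∈ M → a = a')

def IsDeltaMatching {α β : Type} (A : α → EReal × EReal) (B : β → EReal × EReal)
    (δ : ℝ≥0∞) : Prop :=
  ∃ M : Set (α × β), IsMatching M ∧
    (∀ p ∈ M, dPt (A p.1) (B p.2) ≤ δ) ∧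
    (∀ a, (∀ b, (a, b) ∉ M) → diagDist (A a) ≤ δ) ∧
    (∀ b, (∀ a, (a, b) ∉ M) → diagDist (B b) ≤ δ)

noncomputable def dBottle {α β : Type} (A : α → EReal × EReal) (B : β → EReal × EReal) : ℝ≥0∞ :=
  sInf {d : ℝ≥0∞ | ∃ δ : ℝ, 0 ≤ δ ∧ IsDeltaMatching A B (ENNReal.ofReal δ) ∧ d = ENNReal.ofReal δ}

end Matchings

section Measure

noncomputable def persIm {k : Type} [Field k] (V : PersMod k ℝ) (a : EReal) (c : ℝ) :
    Submodule k (V.space c) :=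
  if h : ∃ a' : ℝ, a = (a' : EReal) ∧ a' ≤ c then
    LinearMap.range (V.map h.choose c h.choose_spec.2)
  else ⊥

noncomputable def persKer {k : Type} [Field k] (V : PersMod k ℝ) (c : ℝ) (d : EReal) :
    Submodule k (V.space c) :=
  if h : ∃ d' : ℝ, d = (d' : EReal) ∧ c ≤ d' then
    LinearMap.ker (V.map c h.choose h.choose_spec.2)
  else ⊤

noncomputable def persMeasure {k : Type} [Field k] (V : PersMod k ℝ)
    (a : EReal) (b c : ℝ) (d : EReal) : ℕ∞ :=
  edim k
    (↥(persIm V (b : EReal) c ⊓ persKer V c d) ⧸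
      Submodule.comap (persIm V (b : EReal) c ⊓ persKer V c d).subtype
        (persIm V a c ⊓ persKer V c d))

end Measure

section Interleaving

def Interleaved (k : Type) [Field k] (U V : PersMod k ℝ) (δ : ℝ) : Prop :=
  ∃ (φ : ∀ t : ℝ, U.space t →ₗ[k] V.space (t + δ))
    (ψ : ∀ t : ℝ, V.space t →ₗ[k] U.space (t + δ)),
    (∀ s t (h : s ≤ t),
      (φ t).comp (U.map s t h) = (V.map (s + δ) (t + δ) (by linarith)).comp (φ s)) ∧
    (∀ s t (h : s ≤ t),
      (ψ t).comp (V.map s t h) = (U.map (s + δ) (t + δ) (by linarith)).comp (ψ s)) ∧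
    (∀ t (h : t ≤ t + δ + δ), (ψ (t + δ)).comp (φ t) = U.map t (t + δ + δ) h) ∧
    (∀ t (h : t ≤ t + δ + δ), (φ (t + δ)).comp (ψ t) = V.map t (t + δ + δ) h)

noncomputable def dInter (k : Type) [Field k] (U V : PersMod k ℝ) : ℝ≥0∞ :=
  sInf {d : ℝ≥0∞ | ∃ δ : ℝ, 0 ≤ δ ∧ Interleaved k U V δ ∧ d = ENNReal.ofReal δ}

def QTame (k : Type) [Field k] (V : PersMod k ℝ) : Prop :=
  ∀ s t : ℝ, ∀ h : s < t, erank (V.map s t h.le) ≠ ⊤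

def LocFinitePM (k : Type) [Field k] (W : PersMod k ℝ) : Prop :=
  ∃ (L : Type) (J : L → Set ℝ) (hJ : ∀ ℓ, IsIntervalSet (J ℓ)),
    PersIso W (dsum fun ℓ => intervalModule k ℝ (J ℓ) (hJ ℓ)) ∧
    ∀ S : Set ℝ, Bornology.IsBounded S → {ℓ : L | (J ℓ ∩ S).Nonempty}.Finite

noncomputable def zeroPers (k : Type) [Field k] : PersMod k ℝ where
  space _ := PUnit
  addCommGroup := fun _ => inferInstance
  module := fun _ => inferInstance
  map _ _ _ := 0
  map_id t := LinearMap.ext fun x => Subsingleton.elim _ _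
  map_comp r s t h1 h2 := LinearMap.ext fun x => Subsingleton.elim _ _

noncomputable def smoothing {k : Type} [Field k] (V : PersMod k ℝ) (ε : ℝ) (hε : 0 < ε) :
    PersMod k ℝ where
  space t := LinearMap.range (V.map (t - ε) (t + ε) (by linarith))
  addCommGroup := fun _ => inferInstance
  module := fun _ => inferInstance
  map s t h := LinearMap.restrict (V.map (s + ε) (t + ε) (by linarith))
    (p := LinearMap.range (V.map (s - ε) (s + ε) (by linarith)))
    (q := LinearMap.range (V.map (t - ε) (t + ε) (by linarith)))
    (by
      rintro x ⟨y, rfl⟩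
      refine ⟨V.map (s - ε) (t - ε) (by linarith) y, ?_⟩
      have h1 := LinearMap.congr_fun
        (V.map_comp (s - ε) (t - ε) (t + ε) (by linarith) (by linarith)) y
      have h2 := LinearMap.congr_fun
        (V.map_comp (s - ε) (s + ε) (t + ε) (by linarith) (by linarith)) y
      simp only [LinearMap.comp_apply] at h1 h2
      rw [h1, h2])
  map_id t := by
    refine LinearMap.ext fun x => Subtype.ext ?_
    have := LinearMap.congr_fun (V.map_id (t + ε)) x.1
    simpa [LinearMap.restrict_apply] using this
  map_comp r s t h1 h2 := by
    refine LinearMap.ext fun x => Subtype.ext ?_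
    have := LinearMap.congr_fun
      (V.map_comp (r + ε) (s + ε) (t + ε) (by linarith) (by linarith)) x.1
    simpa [LinearMap.restrict_apply] using this

end Interleaving

section Webb

def webbSubmodule (k : Type) [Field k] (t : ℤ) : Submodule k (ℕ → k) where
  carrier := {x | ∀ i : ℕ, (i : ℤ) < -t → x i = 0}
  add_mem' := by
    intro x y hx hy i hi
    simp [Pi.add_apply, hx i hi, hy i hi]
  zero_mem' := by
    intro i hi
    rfl
  smul_mem' := by
    intro c x hx i hi
    simp [Pi.smul_apply, hx i hi]

noncomputable def webbModule (k : Type) [Field k] : PersMod k ↥{n : ℤ | n ≤ 0} where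
  space t := ↥(webbSubmodule k t.1)
  addCommGroup := fun _ => inferInstance
  module := fun _ => inferInstance
  map s t h := Submodule.inclusion (by
    intro x hx
    have hx' : ∀ i : ℕ, (i : ℤ) < -s.1 → x i = 0 := hx
    intro i hi
    exact hx' i (lt_of_lt_of_le hi (neg_le_neg h)))
  map_id t := LinearMap.ext fun x => rfl
  map_comp r s t h1 h2 := LinearMap.ext fun x => rfl

end Webb

section Decorated

/-- `decMem t x` : the real number `t` belongs to the interval described by the
decorated pair `x = ((p, εp), (q, εq))`, where the decoration `false` means `⁻`
and `true` means `⁺`. -/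
def decMem (t : ℝ) (x : (EReal × Bool) × (EReal × Bool)) : Prop :=
  (x.1.1 < (t : EReal) ∨ (x.1.1 = (t : EReal) ∧ x.1.2 = false)) ∧
  ((t : EReal) < x.2.1 ∨ ((t : EReal) = x.2.1 ∧ x.2.2 = true))

/-- A valid decorated pair: the left coordinate is `p⁻`/`p⁺` for a real `p` or `−∞⁺`,
the right coordinate is `q⁻`/`q⁺` for a real `q` or `+∞⁻`, and the corresponding
interval is nonempty (i.e. `p* < q*`). -/
def ValidDec (x : (EReal × Bool) × (EReal × Bool)) : Prop :=
  (x.1.1 = ⊥ → x.1.2 = true) ∧ x.1.1 ≠ ⊤ ∧ (x.2.1 = ⊤ → x.2.2 = false) ∧ x.2.1 ≠ ⊥ ∧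
  {t : ℝ | decMem t x}.Nonempty

/-- The decorated pair `x` belongs to the rectangle `[a,b] × [c,d]`, i.e.
`[b,c] ⊆ ⟨p*,q*⟩ ⊆ (a,d)`. -/
def decInRect (x : (EReal × Bool) × (EReal × Bool)) (a : EReal) (b c : ℝ) (d : EReal) : Prop :=
  (∀ t ∈ Set.Icc b c, decMem t x) ∧
  (∀ t : ℝ, decMem t x → a < (t : EReal) ∧ (t : EReal) < d)

/-- `Dgm` is (a labelling of) the decorated persistence diagram of `V`. -/
def IsDgmOf {k : Type} [Field k] (V : PersMod k ℝ) {ι : Type}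
    (Dgm : ι → (EReal × Bool) × (EReal × Bool)) : Prop :=
  (∀ i, ValidDec (Dgm i)) ∧
  ∀ (a : EReal) (b c : ℝ) (d : EReal), a < (b : EReal) → b ≤ c → (c : EReal) < d →
    persMeasure V a b c d = ecard {i : ι // decInRect (Dgm i) a b c d}

end Decorated

section RMeasure

/-- `[a,b] × [c,d]` is a (nondegenerate) rectangle contained in `D`. -/
def RectIn (D : Set (ℝ × ℝ)) (a b c d : ℝ) : Prop :=
  a < b ∧ c < d ∧ Set.Icc a b ×ˢ Set.Icc c d ⊆ D

/-- An r-measure on `D`: additivity under horizontal and vertical splitting. -/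
def IsRMeasure (D : Set (ℝ × ℝ)) (μ : ℝ → ℝ → ℝ → ℝ → ℕ∞) : Prop :=
  (∀ a p b c d, a < p → p < b → RectIn D a b c d → μ a b c d = μ a p c d + μ p b c d) ∧
  (∀ a b c q d, c < q → q < d → RectIn D a b c d → μ a b c d = μ a b c q + μ a b q d)

/-- Membership of a decorated point of the plane (`Bool` decoration: `true` = `⁺`,
`false` = `⁻`) in the closed rectangle `[a,b] × [c,d]`. -/
def dptMem (x : (ℝ × Bool) × (ℝ × Bool)) (a b c d : ℝ) : Prop :=
  a ≤ x.1.1 ∧ x.1.1 ≤ b ∧ c ≤ x.2.1 ∧ x.2.1 ≤ d ∧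
  (x.1.1 = a → x.1.2 = true) ∧ (x.1.1 = b → x.1.2 = false) ∧
  (x.2.1 = c → x.2.2 = true) ∧ (x.2.1 = d → x.2.2 = false)

/-- The r-interior `D•` of `D`: decorated points contained in some rectangle of `D`. -/
def rInt (D : Set (ℝ × ℝ)) : Set ((ℝ × Bool) × (ℝ × Bool)) :=
  {x | ∃ a b c d, RectIn D a b c d ∧ dptMem x a b c d}

/-- The number of decorated points, counted with multiplicity `m`, lying in the
rectangle `[a,b] × [c,d]`. -/
noncomputable def dcount (m : (ℝ × Bool) × (ℝ × Bool) → ℕ) (a b c d : ℝ) : ℕ∞ :=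
  ecard (Σ x : {x : (ℝ × Bool) × (ℝ × Bool) // dptMem x a b c d}, Fin (m x.1))

end RMeasure

section WebbProof

/-- The element `-n` of the poset of nonpositive integers. -/
def tnn (n : ℕ) : ↥{n : ℤ | n ≤ 0} := ⟨-(n : ℤ), by simp [Set.mem_setOf_eq]⟩

lemma tnn_le {m n : ℕ} (h : n ≤ m) : tnn m ≤ tnn n := by
  show -(m : ℤ) ≤ -(n : ℤ)
  omega

lemma le_tnn_zero (t : ↥{n : ℤ | n ≤ 0}) : t ≤ tnn 0 := by
  show t.1 ≤ -((0 : ℕ) : ℤ)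
  have h : t.1 ≤ 0 := t.2
  simpa using h

noncomputable abbrev webbD (k : Type) [Field k] {L : Type} (J : L → Set ↥{n : ℤ | n ≤ 0})
    (hJ : ∀ ℓ, IsIntervalSet (J ℓ)) : PersMod k ↥{n : ℤ | n ≤ 0} :=
  dsum fun ℓ => intervalModule k ↥{n : ℤ | n ≤ 0} (J ℓ) (hJ ℓ)

open Cardinal in
theorem webb_aux (k : Type) [Field k] (L : Type) (J : L → Set ↥{n : ℤ | n ≤ 0})
    (hJ : ∀ ℓ, IsIntervalSet (J ℓ))
    (e : ∀ t, (webbModule k).space t ≃ₗ[k] (webbD k J hJ).space t)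
    (he : ∀ s t (h : s ≤ t),
      (e t).toLinearMap.comp ((webbModule k).map s t h)
        = ((webbD k J hJ).map s t h).comp (e s).toLinearMap) : False := by
  classical
  -- the maps of `D` expressed through those of `W`
  have key : ∀ (s t : ↥{n : ℤ | n ≤ 0}) (h : s ≤ t) (z : (webbD k J hJ).space s),
      (webbD k J hJ).map s t h z = e t ((webbModule k).map s t h ((e s).symm z)) := by
    intro s t h z
    have h2 := LinearMap.congr_fun (he s t h) ((e s).symm z)
    simp only [LinearMap.comp_apply, LinearEquiv.coe_coe] at h2
    rw [LinearEquiv.apply_symm_apply] at h2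
    exact h2.symm
  -- ranges correspond
  have hrange : ∀ (s t : ↥{n : ℤ | n ≤ 0}) (h : s ≤ t) (y : (webbD k J hJ).space t),
      y ∈ Set.range ((webbD k J hJ).map s t h) ↔
        ((e t).symm y : (webbModule k).space t) ∈ Set.range ((webbModule k).map s t h) := by
    intro s t h y
    constructor
    · rintro ⟨z, rfl⟩
      refine ⟨(e s).symm z, ?_⟩
      rw [key s t h z, LinearEquiv.symm_apply_apply]
    · rintro ⟨u, hu⟩
      refine ⟨e s u, ?_⟩
      rw [key s t h (e s u), LinearEquiv.symm_apply_apply, hu, LinearEquiv.apply_symm_apply]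
  -- the value of the direct-sum map at a component
  have hcomp : ∀ (s t : ↥{n : ℤ | n ≤ 0}) (h : s ≤ t)
      (z : Π₀ ℓ : L, (PLift (s ∈ J ℓ) → k)) (ℓ : L),
      (show Π₀ ℓ : L, (PLift (t ∈ J ℓ) → k) from (webbD k J hJ).map s t h z) ℓ =
        ((intervalModule k ↥{n : ℤ | n ≤ 0} (J ℓ) (hJ ℓ)).map s t h) (z ℓ) := by
    intro s t h z ℓ
    exact DFinsupp.mapRange_apply _ (fun i => map_zero _) z ℓ
  -- Step A: every interval is upward closed
  have hup : ∀ (ℓ : L) (s t : ↥{n : ℤ | n ≤ 0}) (h : s ≤ t), s ∈ J ℓ → t ∈ J ℓ := by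
    intro ℓ s t h hs
    by_contra ht
    have hWinj : Function.Injective ((webbModule k).map s t h) := by
      intro a b hab
      exact Subtype.ext (congrArg (fun z : (webbModule k).space t => z.1) hab)
    have hDinj : Function.Injective ((webbD k J hJ).map s t h) := by
      intro x y hxy
      rw [key s t h x, key s t h y] at hxy
      have h3 := hWinj ((e t).injective hxy)
      exact (e s).symm.injective h3
    have hmap0 : (webbD k J hJ).map s t h (DFinsupp.single ℓ (fun _ => (1 : k))) = 0 := by
      refine DFinsupp.ext fun ℓ' =>
        (hcomp s t h (DFinsupp.single ℓ (fun _ => (1 : k))) ℓ').trans ?_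
      by_cases hℓ : ℓ' = ℓ
      · subst hℓ
        exact funext fun hh => absurd hh.down ht
      · rw [DFinsupp.single_eq_of_ne hℓ]; erw [map_zero]
        exact (DFinsupp.zero_apply _).symm
    have hx0 : DFinsupp.single (β := fun ℓ : L => PLift (s ∈ J ℓ) → k) ℓ (fun _ => (1 : k)) = 0 :=
      hDinj (by erw [hmap0, map_zero])
    have h1 : DFinsupp.single (β := fun ℓ : L => PLift (s ∈ J ℓ) → k) ℓ
        (fun _ => (1 : k)) ℓ = 0 := by rw [hx0]; rfl
    rw [DFinsupp.single_eq_same] at h1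
    exact one_ne_zero (congrFun h1 ⟨hs⟩)
  -- every interval contains 0
  have hmem0 : ∀ ℓ, tnn 0 ∈ J ℓ := by
    intro ℓ
    obtain ⟨t, ht⟩ := (hJ ℓ).1
    exact hup ℓ t (tnn 0) (le_tnn_zero t) ht
  -- Step B: every interval is bounded below
  have hbdd : ∀ ℓ, ∃ n : ℕ, tnn n ∉ J ℓ := by
    intro ℓ
    by_contra hc
    push_neg at hc
    have hw : ∀ n : ℕ, ((e (tnn 0)).symm
          (DFinsupp.single (β := fun ℓ : L => PLift (tnn 0 ∈ J ℓ) → k) ℓ (fun _ => (1 : k)))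
          : (webbModule k).space (tnn 0)) ∈
        Set.range ((webbModule k).map (tnn n) (tnn 0) (le_tnn_zero _)) := by
      intro n
      erw [← hrange]
      refine ⟨DFinsupp.single ℓ (fun _ => (1 : k)), ?_⟩
      refine DFinsupp.ext (β := fun ℓ : L => PLift (tnn 0 ∈ J ℓ) → k) fun ℓ' =>
        (hcomp (tnn n) (tnn 0) (le_tnn_zero _) (DFinsupp.single ℓ fun _ => (1 : k)) ℓ').trans ?_
      by_cases hℓ : ℓ' = ℓ
      · subst hℓ
        have hval : ((intervalModule k ↥{n : ℤ | n ≤ 0} (J ℓ') (hJ ℓ')).map (tnn n) (tnn 0)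
              (le_tnn_zero _))
              ((DFinsupp.single (β := fun ℓ : L => PLift (tnn n ∈ J ℓ) → k) ℓ'
                (fun _ => (1 : k))) ℓ')
            = (DFinsupp.single (β := fun ℓ : L => PLift (tnn 0 ∈ J ℓ) → k) ℓ'
                (fun _ => (1 : k))) ℓ' := by
          rw [DFinsupp.single_eq_same, DFinsupp.single_eq_same]
          funext hh
          show (if hs : tnn n ∈ J ℓ' then (1 : k) else 0) = 1
          rw [dif_pos (hc n)]
        exact hval
      · have hval : ((intervalModule k ↥{n : ℤ | n ≤ 0} (J ℓ') (hJ ℓ')).map (tnn n) (tnn 0)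
              (le_tnn_zero _))
              ((DFinsupp.single (β := fun ℓ : L => PLift (tnn n ∈ J ℓ) → k) ℓ
                (fun _ => (1 : k))) ℓ')
            = (DFinsupp.single (β := fun ℓ : L => PLift (tnn 0 ∈ J ℓ) → k) ℓ
                (fun _ => (1 : k))) ℓ' := by
          erw [DFinsupp.single_eq_of_ne hℓ,
            DFinsupp.single_eq_of_ne hℓ, map_zero]; rfl
        exact hval
    set w : (webbModule k).space (tnn 0) := (e (tnn 0)).symm
      (DFinsupp.single (β := fun ℓ : L => PLift (tnn 0 ∈ J ℓ) → k) ℓ (fun _ => (1 : k)))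
      with hwdef
    have hwn : ∀ n : ℕ, w.1 n = 0 := by
      intro n
      obtain ⟨u, hu⟩ := hw (n + 1)
      have hval : w.1 = u.1 := by rw [← hu]; rfl
      rw [hval]
      refine u.2 n ?_
      show (n : ℤ) < -(-((n + 1 : ℕ) : ℤ))
      push_cast
      omega
    have hw0 : w = 0 := Subtype.ext (funext hwn)
    have hδ0 : DFinsupp.single (β := fun ℓ : L => PLift (tnn 0 ∈ J ℓ) → k) ℓ
        (fun _ => (1 : k)) = 0 := by
      have h4 := congrArg (e (tnn 0)) hw0
      erw [hwdef, LinearEquiv.apply_symm_apply, map_zero] at h4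
      exact h4
    have h1 : DFinsupp.single (β := fun ℓ : L => PLift (tnn 0 ∈ J ℓ) → k) ℓ
        (fun _ => (1 : k)) ℓ = 0 := by rw [hδ0]; rfl
    rw [DFinsupp.single_eq_same] at h1
    exact one_ne_zero (congrFun h1 ⟨hc 0⟩)
  -- Step C: for each n there is at most one interval with lower endpoint -n
  have huniq : ∀ (n : ℕ) (ℓ₁ ℓ₂ : L), tnn n ∈ J ℓ₁ → tnn (n+1) ∉ J ℓ₁ →
      tnn n ∈ J ℓ₂ → tnn (n+1) ∉ J ℓ₂ → ℓ₁ = ℓ₂ := by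
    intro n ℓ₁ ℓ₂ h1m h1n h2m h2n
    by_contra hne
    have h1 : tnn (n + 1) ≤ tnn n := tnn_le (Nat.le_succ n)
    -- evaluation at coordinate n
    let φ : (webbModule k).space (tnn n) →ₗ[k] k :=
      { toFun := fun x => x.1 n
        map_add' := fun x y => rfl
        map_smul' := fun c x => rfl }
    have hker : ∀ x : (webbModule k).space (tnn n),
        φ x = 0 ↔ x ∈ Set.range ((webbModule k).map (tnn (n+1)) (tnn n) h1) := by
      intro x
      constructor
      · intro hx
        have hmem : x.1 ∈ webbSubmodule k (tnn (n+1)).1 := by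
          intro i hi
          have hi' : (i : ℤ) < ((n + 1 : ℕ) : ℤ) := by
            have heq : -(tnn (n+1)).1 = ((n + 1 : ℕ) : ℤ) := by
              show -(-((n + 1 : ℕ) : ℤ)) = _
              ring
            rwa [heq] at hi
          have hin : i ≤ n := by
            have h5 : (i : ℤ) ≤ (n : ℤ) := by push_cast at hi' ⊢; omega
            exact_mod_cast h5
          rcases Nat.lt_or_ge i n with h | h
          · refine x.2 i ?_
            show (i : ℤ) < -(-((n : ℕ) : ℤ))
            push_cast
            omega
          · have hieq : i = n := le_antisymm hin h
            rw [hieq]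
            exact hx
        exact ⟨⟨x.1, hmem⟩, Subtype.ext rfl⟩
      · rintro ⟨u, rfl⟩
        show u.1 n = 0
        refine u.2 n ?_
        show (n : ℤ) < -(-((n + 1 : ℕ) : ℤ))
        push_cast
        omega
    -- transported functional
    let ψ : (webbD k J hJ).space (tnn n) → k := fun y => φ ((e (tnn n)).symm y)
    have hψker : ∀ y : (webbD k J hJ).space (tnn n),
        ψ y = 0 ↔ y ∈ Set.range ((webbD k J hJ).map (tnn (n+1)) (tnn n) h1) := by
      intro y
      rw [hrange]
      exact hker _
    have hzero : ∀ (ℓ : L), tnn (n+1) ∉ J ℓ →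
        ∀ y : Π₀ ℓ : L, (PLift (tnn n ∈ J ℓ) → k),
        y ∈ Set.range ((webbD k J hJ).map (tnn (n+1)) (tnn n) h1) → y ℓ = 0 := by
      rintro ℓ hℓ y ⟨z, rfl⟩
      refine (hcomp (tnn (n+1)) (tnn n) h1 z ℓ).trans ?_
      funext hh
      show (if hs : tnn (n+1) ∈ J ℓ then _ else 0) = 0
      rw [dif_neg hℓ]
    obtain ⟨δ₁, hδ₁⟩ : ∃ x : Π₀ ℓ : L, (PLift (tnn n ∈ J ℓ) → k),
        x = DFinsupp.single ℓ₁ (fun _ => (1 : k)) := ⟨_, rfl⟩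
    obtain ⟨δ₂, hδ₂⟩ : ∃ x : Π₀ ℓ : L, (PLift (tnn n ∈ J ℓ) → k),
        x = DFinsupp.single ℓ₂ (fun _ => (1 : k)) := ⟨_, rfl⟩
    have hc₁ : ψ δ₁ ≠ 0 := by
      intro h0
      have h6 := hzero ℓ₁ h1n δ₁ ((hψker δ₁).mp h0)
      rw [hδ₁, DFinsupp.single_eq_same] at h6
      exact one_ne_zero (congrFun h6 ⟨h1m⟩)
    have hc₂ : ψ δ₂ ≠ 0 := by
      intro h0
      have h6 := hzero ℓ₂ h2n δ₂ ((hψker δ₂).mp h0)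
      rw [hδ₂, DFinsupp.single_eq_same] at h6
      exact one_ne_zero (congrFun h6 ⟨h2m⟩)
    have hψsub : ∀ y y' : Π₀ ℓ : L, (PLift (tnn n ∈ J ℓ) → k),
        ψ (y - y') = ψ y - ψ y' := by
      intro y y'
      show φ ((e (tnn n)).symm (y - y')) = φ ((e (tnn n)).symm y) - φ ((e (tnn n)).symm y')
      exact (congrArg φ (map_sub ((e (tnn n)).symm) y y')).trans (map_sub φ _ _)
    have hψsmul : ∀ (c : k) (y : Π₀ ℓ : L, (PLift (tnn n ∈ J ℓ) → k)),
        ψ (c • y) = c * ψ y := by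
      intro c y
      show φ ((e (tnn n)).symm (c • y)) = c * φ ((e (tnn n)).symm y)
      exact (congrArg φ (map_smul ((e (tnn n)).symm) c y)).trans (map_smul φ c _)
    have hψz : ψ (ψ δ₂ • δ₁ - ψ δ₁ • δ₂) = 0 := by
      refine (hψsub _ _).trans ?_
      rw [hψsmul, hψsmul]
      ring
    have hz1 := hzero ℓ₁ h1n _ ((hψker _).mp hψz)
    have happ : (ψ δ₂ • δ₁ - ψ δ₁ • δ₂) ℓ₁ =
        ψ δ₂ • (δ₁ ℓ₁) - ψ δ₁ • (δ₂ ℓ₁) := by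
      rw [DFinsupp.sub_apply, DFinsupp.smul_apply, DFinsupp.smul_apply]
    rw [happ, hδ₁, hδ₂, DFinsupp.single_eq_same, DFinsupp.single_eq_of_ne hne,
      smul_zero, sub_zero] at hz1
    have h7 := congrFun hz1 ⟨h1m⟩
    simp only [Pi.smul_apply, smul_eq_mul, mul_one] at h7
    rw [← hδ₂] at h7
    exact hc₂ h7
  -- Step D: L is countable
  have hcnt : Countable L := by
    have hpos : ∀ ℓ, 0 < Nat.find (hbdd ℓ) := by
      intro ℓ
      rcases Nat.eq_zero_or_pos (Nat.find (hbdd ℓ)) with h | h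
      · exact absurd (hmem0 ℓ) (h ▸ Nat.find_spec (hbdd ℓ))
      · exact h
    have hmmem : ∀ ℓ, tnn (Nat.find (hbdd ℓ) - 1) ∈ J ℓ := by
      intro ℓ
      have h8 := Nat.find_min (hbdd ℓ) (m := Nat.find (hbdd ℓ) - 1)
        (by have := hpos ℓ; omega)
      exact not_not.mp h8
    have hmnot : ∀ ℓ, tnn ((Nat.find (hbdd ℓ) - 1) + 1) ∉ J ℓ := by
      intro ℓ
      have hs : (Nat.find (hbdd ℓ) - 1) + 1 = Nat.find (hbdd ℓ) := by
        have := hpos ℓ; omega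
      rw [hs]
      exact Nat.find_spec (hbdd ℓ)
    have hinj : Function.Injective (fun ℓ => Nat.find (hbdd ℓ) - 1) := by
      intro ℓ₁ ℓ₂ hℓ
      simp only at hℓ
      refine huniq (Nat.find (hbdd ℓ₁) - 1) ℓ₁ ℓ₂ (hmmem ℓ₁) (hmnot ℓ₁) ?_ ?_
      · rw [hℓ]; exact hmmem ℓ₂
      · rw [hℓ]; exact hmnot ℓ₂
    exact hinj.countable
  -- Step E: rank comparison
  haveI : ∀ ℓ, Unique (PLift (tnn 0 ∈ J ℓ)) := fun ℓ =>
    ⟨⟨⟨hmem0 ℓ⟩⟩, fun a => Subsingleton.elim _ _⟩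
  have E2 : (webbD k J hJ).space (tnn 0) ≃ₗ[k] (L →₀ k) :=
    (DFinsupp.mapRange.linearEquiv
        (fun ℓ => LinearEquiv.funUnique (PLift (tnn 0 ∈ J ℓ)) k k)).trans
      (finsuppLequivDFinsupp (ι := L) (R := k) (M := k)).symm
  have htop : webbSubmodule k (tnn 0).1 = ⊤ := by
    ext x
    simp only [Submodule.mem_top, iff_true]
    intro i hi
    exfalso
    have heq : -(tnn 0).1 = (0 : ℤ) := by
      show -(-((0 : ℕ) : ℤ)) = 0
      simp
    rw [heq] at hi
    omega
  have E1 : (webbModule k).space (tnn 0) ≃ₗ[k] (ℕ → k) :=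
    LinearEquiv.ofTop _ htop
  have hbig : ℵ₀ < Module.rank k (ℕ → k) := by
    rw [rank_fun_infinite]
    calc ℵ₀ < 2 ^ ℵ₀ := Cardinal.cantor _
      _ ≤ #k ^ ℵ₀ := by
          refine Cardinal.power_le_power_right ?_
          exact Cardinal.two_le_iff.mpr ⟨0, 1, zero_ne_one⟩
      _ = #(ℕ → k) := by rw [← Cardinal.mk_nat, Cardinal.power_def]
  have hWD : Module.rank k ((webbModule k).space (tnn 0))
      = Module.rank k ((webbD k J hJ).space (tnn 0)) :=
    (e (tnn 0)).rank_eq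
  have hW : Module.rank k ((webbModule k).space (tnn 0)) = Module.rank k (ℕ → k) :=
    E1.rank_eq
  have hDr : Module.rank k ((webbD k J hJ).space (tnn 0)) = #L := by
    rw [E2.rank_eq, rank_finsupp_self']
  have hsmall : Module.rank k ((webbD k J hJ).space (tnn 0)) ≤ ℵ₀ := by
    rw [hDr]
    exact Cardinal.mk_le_aleph0
  rw [← hW, hWD] at hbig
  exact absurd (hbig.trans_le hsmall) (lt_irrefl _)

end WebbProof

theorem stmt3 (k : Type) [Field k] :
    ¬ ∃ (L : Type) (J : L → Set ↥{n : ℤ | n ≤ 0}) (hJ : ∀ ℓ, IsIntervalSet (J ℓ)),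
      PersIso (webbModule k) (dsum fun ℓ => intervalModule k ↥{n : ℤ | n ≤ 0} (J ℓ) (hJ ℓ)) := by
  rintro ⟨L, J, hJ, e, he⟩
  exact webb_aux k L J hJ e he
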